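/- Let β₀, β₁ ∈ (0,1) be reals with β₀ + β₁ ≥ 1, and set a₀ = β₀(1−β₁), a₁ = β₁(1−β₀), a₂ = β₀β₁, a₃ = (1−β₀)(1−β₁). Let r : ℕ → ℝ satisfy r₀ = 1 and r_{n+1} = a₀·rₙ + a₁·rₙ + a₂·(2rₙ − rₙ²) for all n. Then the sequence (rₙ) converges, with limit (a₂ − a₃)/a₂ = (β₀ + β₁ − 1)/(β₀β₁). -/

import Mathlib

/-- For `β₀, β₁ ∈ (0,1)` with `β₀ + β₁ ≥ 1`, set `a₀ = β₀(1-β₁)`,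
`a₁ = β₁(1-β₀)`, `a₂ = β₀β₁`, `a₃ = (1-β₀)(1-β₁)`. If `r₀ = 1` and
`r_{n+1} = a₀ rₙ + a₁ rₙ + a₂ (2rₙ - rₙ²)` for all `n`, then `(rₙ)` converges with limit
`(a₂ - a₃)/a₂ = (β₀ + β₁ - 1)/(β₀β₁)`. -/
theorem stmt13 (β₀ β₁ : ℝ) (h0 : β₀ ∈ Set.Ioo (0 : ℝ) 1) (h1 : β₁ ∈ Set.Ioo (0 : ℝ) 1)
    (hsum : 1 ≤ β₀ + β₁) (r : ℕ → ℝ) (hr0 : r 0 = 1)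
    (hrec : ∀ n : ℕ, r (n + 1) =
      β₀ * (1 - β₁) * r n + β₁ * (1 - β₀) * r n + β₀ * β₁ * (2 * r n - (r n) ^ 2)) :
    Filter.Tendsto r Filter.atTop
      (nhds ((β₀ * β₁ - (1 - β₀) * (1 - β₁)) / (β₀ * β₁))) ∧
    (β₀ * β₁ - (1 - β₀) * (1 - β₁)) / (β₀ * β₁) = (β₀ + β₁ - 1) / (β₀ * β₁) := by
  obtain ⟨hb0, hb0'⟩ := h0
  obtain ⟨hb1, hb1'⟩ := h1
  have hp : 0 < β₀ * β₁ := mul_pos hb0 hb1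
  set s : ℝ := β₀ + β₁ with hs
  set p : ℝ := β₀ * β₁ with hpdef
  set L : ℝ := (s - 1) / p with hL
  have hpL : p * L = s - 1 := by
    rw [hL]; field_simp [hp.ne']
  have hL0 : 0 ≤ L := div_nonneg (by linarith) hp.le
  have hL1 : L ≤ 1 := by
    rw [hL, div_le_one hp]
    nlinarith
  have hrec' : ∀ n, r (n + 1) = s * r n - p * (r n) ^ 2 := by
    intro n; rw [hrec n]; ring
  -- key step inequalities
  have hstep : ∀ x : ℝ, L ≤ x → x ≤ 1 → L ≤ s * x - p * x ^ 2 ∧ s * x - p * x ^ 2 ≤ x := by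
    intro x hlo hhi
    have hx0 : 0 ≤ x := hL0.trans hlo
    have id1 : s * x - p * x ^ 2 - x = -(p * x * (x - L)) := by
      have : p * L * x = (s - 1) * x := by rw [hpL]
      nlinarith [this]
    have id2 : s * x - p * x ^ 2 - L = (x - L) * (s - p * (x + L)) := by
      nlinarith [hpL]
    constructor
    · have h1 : 0 ≤ s - p * (x + L) := by nlinarith [hpL]
      nlinarith [mul_nonneg (sub_nonneg.2 hlo) h1, id2]
    · nlinarith [mul_nonneg (mul_nonneg hp.le hx0) (sub_nonneg.2 hlo), id1]
  -- invariant: L ≤ r n ≤ 1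
  have hinv : ∀ n, L ≤ r n ∧ r n ≤ 1 := by
    intro n
    induction n with
    | zero => rw [hr0]; exact ⟨hL1, le_refl 1⟩
    | succ k ih =>
      obtain ⟨hlo, hhi⟩ := ih
      obtain ⟨h1', h2'⟩ := hstep (r k) hlo hhi
      rw [hrec' k]
      exact ⟨h1', h2'.trans hhi⟩
  have hdec : ∀ n, r (n + 1) ≤ r n := by
    intro n
    obtain ⟨hlo, hhi⟩ := hinv n
    rw [hrec' n]
    exact (hstep (r n) hlo hhi).2
  have hanti : Antitone r := antitone_nat_of_succ_le hdec
  have hbdd : BddBelow (Set.range r) := ⟨L, by rintro x ⟨n, rfl⟩; exact (hinv n).1⟩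
  have htend : Filter.Tendsto r Filter.atTop (nhds (⨅ n, r n)) :=
    tendsto_atTop_ciInf hanti hbdd
  set c : ℝ := ⨅ n, r n with hc
  have hcL : L ≤ c := le_ciInf fun n => (hinv n).1
  -- limit equation
  have h1' : Filter.Tendsto (fun n => r (n + 1)) Filter.atTop (nhds c) :=
    htend.comp (Filter.tendsto_add_atTop_nat 1)
  have h2' : Filter.Tendsto (fun n => s * r n - p * (r n) ^ 2) Filter.atTop
      (nhds (s * c - p * c ^ 2)) := by
    have := ((htend.const_mul s).sub ((htend.pow 2).const_mul p))
    exact this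
  have heq : c = s * c - p * c ^ 2 := by
    have : Filter.Tendsto (fun n => r (n + 1)) Filter.atTop (nhds (s * c - p * c ^ 2)) := by
      simpa [hrec'] using h2'
    exact tendsto_nhds_unique h1' this
  have hcL' : c = L := by
    have hfac : p * c * (c - L) = 0 := by nlinarith [hpL]
    rcases mul_eq_zero.1 hfac with h | h
    · rcases mul_eq_zero.1 h with h' | h'
      · exact absurd h' hp.ne'
      · have : L ≤ 0 := h' ▸ hcL
        linarith [le_antisymm this hL0, h']
    · linarith [sub_eq_zero.1 h]
  have hlimeq : (β₀ * β₁ - (1 - β₀) * (1 - β₁)) / (β₀ * β₁) = L := by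
    rw [hL, hs, hpdef]; ring_nf
  constructor
  · rw [hlimeq, ← hcL']; exact htend
  · rw [hlimeq, hL]
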